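/- arXiv:2307.04490 — 2 statements merged into one kernel-verified Lean document; each statement's English description precedes it below -/
import Mathlib

section
/- Fix N ≥ 2 and Δγ > 0, and let D be the (N+1)×(N+1) SBP21 difference operator with entries D₀₀ = −1/Δγ, D₀₁ = 1/Δγ; D_{k,k−1} = −1/(2Δγ), D_{k,k+1} = 1/(2Δγ) for 1 ≤ k ≤ N−1; D_{N,N−1} = −1/Δγ, D_{N,N} = 1/Δγ; all other entries zero. Define w ∈ ℝ^{N+1} by w₀ = 1, w_k = 2(−1)^k for 1 ≤ k ≤ N−1, and w_N = (−1)^N. Then w ≠ 0 and Dᵀ w = 0; i.e. the transpose of the SBP21 operator possesses a nontrivial highly oscillating null mode (the 'π-mode'), so D itself is not null-space consistent without regularization. -/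
open Matrix

lemma sum_two'_stmt17 {n : ℕ} (f : Fin n → ℝ) (a b : Fin n) (hab : a ≠ b)
    (h : ∀ i, i ≠ a → i ≠ b → f i = 0) : ∑ i, f i = f a + f b := by
  rw [← Finset.sum_pair hab]
  refine (Finset.sum_subset (Finset.subset_univ _) ?_).symm
  intro i _ hi
  simp only [Finset.mem_insert, Finset.mem_singleton, not_or] at hi
  exact h i hi.1 hi.2

set_option linter.unreachableTactic false in
set_option linter.unusedTactic false in
/-- The transpose of the SBP21 operator `D` possesses a nontrivial highly oscillating
null mode (the `π`-mode) `w` with `w₀ = 1`, `w_k = 2(−1)^k` for `1 ≤ k ≤ N−1` and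
`w_N = (−1)^N`: `w ≠ 0` and `Dᵀ w = 0`. -/
theorem stmt17 (N : ℕ) (hN : 2 ≤ N) (Δγ : ℝ) (hΔ : 0 < Δγ)
    (D : Matrix (Fin (N + 1)) (Fin (N + 1)) ℝ)
    (hD : D = Matrix.of fun i j =>
      if i.val = 0 then
        (if j.val = 0 then -1 / Δγ else if j.val = 1 then 1 / Δγ else 0)
      else if i.val = N then
        (if j.val = N - 1 then -1 / Δγ else if j.val = N then 1 / Δγ else 0)
      else
        (if j.val = i.val - 1 then -1 / (2 * Δγ)
         else if j.val = i.val + 1 then 1 / (2 * Δγ) else 0))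
    (w : Fin (N + 1) → ℝ)
    (hw : w = fun i =>
      if i.val = 0 then 1
      else if i.val = N then (-1 : ℝ) ^ N
      else 2 * (-1 : ℝ) ^ i.val) :
    w ≠ 0 ∧ Dᵀ.mulVec w = 0 := by
  subst hD hw
  have hΔ' : Δγ ≠ 0 := ne_of_gt hΔ
  constructor
  · intro h
    have h0 := congrFun h ⟨0, Nat.succ_pos N⟩
    simp at h0
  · funext j
    simp only [Matrix.mulVec, dotProduct, Matrix.transpose_apply, Matrix.of_apply,
      Pi.zero_apply]
    rcases j with ⟨jv, hjlt⟩
    by_cases h0 : jv = 0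
    · subst h0
      rw [sum_two'_stmt17 _ ⟨0, by omega⟩ ⟨1, by omega⟩ (Fin.ne_of_val_ne (by simp))]
      · simp only [Fin.val_mk]
        split_ifs <;>
          first
            | rfl | omega | exact ‹False›.elim
            | (norm_num; field_simp; first | done | ring1)
      · rintro ⟨iv, hiv⟩ ha hb
        have ha' : iv ≠ 0 := fun h => ha (by simp [h])
        have hb' : iv ≠ 1 := fun h => hb (by simp [h])
        simp only [Fin.val_mk]
        split_ifs <;> first | rfl | omega | exact ‹False›.elim | ring1
    · by_cases hNn : jv = N
      · subst hNn
        have hp : ((-1:ℝ))^jv = (-1)^(jv-1) * (-1) := by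
          conv_lhs => rw [show jv = jv - 1 + 1 by omega]
          rw [pow_succ]
        rw [sum_two'_stmt17 _ ⟨jv - 1, by omega⟩ ⟨jv, by omega⟩
          (Fin.ne_of_val_ne (by simp only [Fin.val_mk]; omega))]
        · simp only [Fin.val_mk]
          split_ifs <;>
            first
              | rfl | omega | exact ‹False›.elim
              | (rw [hp]; field_simp; first | done | ring1)
        · rintro ⟨iv, hiv⟩ ha hb
          have ha' : iv ≠ jv - 1 := fun h => ha (by simp [h])
          have hb' : iv ≠ jv := fun h => hb (by simp [h])
          simp only [Fin.val_mk]
          split_ifs <;> first | rfl | omega | exact ‹False›.elim | ring1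
      · rw [sum_two'_stmt17 _ ⟨jv - 1, by omega⟩ ⟨jv + 1, by omega⟩
          (Fin.ne_of_val_ne (by simp only [Fin.val_mk]; omega))]
        · simp only [Fin.val_mk]
          have e1 : ((-1:ℝ))^(jv+1) = (-1)^(jv-1) := by
            rw [show jv+1 = (jv-1)+2 by omega, pow_add]; norm_num
          split_ifs <;>
            first
              | rfl | omega | exact ‹False›.elim
              | (rw [e1]; field_simp; first | done | ring1)
              | (rw [show ((-1:ℝ))^N = (-1)^(jv-1) by
                    rw [show N = (jv-1)+2 by omega, pow_add]; norm_num]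
                 field_simp; first | done | ring1)
              | (rw [show ((-1:ℝ))^(jv+1) = 1 by rw [show jv+1 = 2 by omega]; norm_num]
                 simp [show jv - 1 = 0 by omega]; field_simp; first | done | ring1)
              | (rw [show ((-1:ℝ))^N = 1 by rw [show N = 2 by omega]; norm_num]
                 simp [show jv - 1 = 0 by omega]; field_simp; first | done | ring1)
        · rintro ⟨iv, hiv⟩ ha hb
          have ha' : iv ≠ jv - 1 := fun h => ha (by simp [h])
          have hb' : iv ≠ jv + 1 := fun h => hb (by simp [h])
          simp only [Fin.val_mk]
          split_ifs <;> first | rfl | omega | exact ‹False›.elim | ring1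
end

section
/- Define the doubled (initial-value) Lagrangian density of eight real variables E_IVP(t₊, ṫ₊, x₊, ẋ₊, t₋, ṫ₋, x₋, ẋ₋) = E_BVP(t₊ + t₋/2, ṫ₊ + ṫ₋/2, x₊ + x₋/2, ẋ₊ + ẋ₋/2) − E_BVP(t₊ − t₋/2, ṫ₊ − ṫ₋/2, x₊ − x₋/2, ẋ₊ − ẋ₋/2), where E_BVP(t, ṫ, x, ẋ) = ½( g₀₀(x) ṫ² − ẋ² ). Then the partial derivatives of E_IVP with respect to the difference variables, evaluated in the physical limit t₋ = ṫ₋ = x₋ = ẋ₋ = 0, equal the corresponding partial derivatives of E_BVP at the plus variables: ∂E_IVP/∂t₋ = ∂E_BVP/∂t = 0, ∂E_IVP/∂ṫ₋ = ∂E_BVP/∂ṫ = g₀₀(x₊) ṫ₊, ∂E_IVP/∂x₋ = ∂E_BVP/∂x = ½ g₀₀′(x₊) ṫ₊², and ∂E_IVP/∂ẋ₋ = ∂E_BVP/∂ẋ = −ẋ₊. Consequently, the Euler–Lagrange equations obtained by varying the difference variables t₋, x₋, evaluated in the physical limit, are exactly the geodesic equations d/dγ( g₀₀(x₊) ṫ₊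 ) = 0 and ẍ₊ + ½ g₀₀′(x₊) ṫ₊² = 0 for the physical curves (t₊, x₊). -/
/-- For the doubled (initial-value) Lagrangian density
`E_IVP(t₊,ṫ₊,x₊,ẋ₊,t₋,ṫ₋,x₋,ẋ₋) = E_BVP(plus + minus/2) − E_BVP(plus − minus/2)` with
`E_BVP(t,ṫ,x,ẋ) = ½(g₀₀(x)ṫ² − ẋ²)`, the partial derivatives with respect to the
difference variables, evaluated in the physical limit (all difference variables zero),
equal the corresponding partial derivatives of `E_BVP` at the plus variables; hence the
Euler–Lagrange equations from varying `t₋`, `x₋` in the physical limit are exactly the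
geodesic equations for the physical curves. -/
theorem stmt18 (m c : ℝ) (hm : 0 < m) (hc : 0 < c)
    (V : ℝ → ℝ) (hV : ContDiff ℝ 1 V)
    (g : ℝ → ℝ) (hg : g = fun y => c ^ 2 + 2 * V y / m)
    (EBVP : ℝ → ℝ → ℝ → ℝ → ℝ)
    (hEBVP : EBVP = fun t td x xd => (1 / 2) * (g x * td ^ 2 - xd ^ 2))
    (EIVP : ℝ → ℝ → ℝ → ℝ → ℝ → ℝ → ℝ → ℝ → ℝ)
    (hEIVP : EIVP = fun tp tdp xp xdp tm tdm xm xdm =>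
      EBVP (tp + tm / 2) (tdp + tdm / 2) (xp + xm / 2) (xdp + xdm / 2)
        - EBVP (tp - tm / 2) (tdp - tdm / 2) (xp - xm / 2) (xdp - xdm / 2)) :
    (∀ tp tdp xp xdp : ℝ,
      deriv (fun tm => EIVP tp tdp xp xdp tm 0 0 0) 0 = 0 ∧
      deriv (fun tdm => EIVP tp tdp xp xdp 0 tdm 0 0) 0 = g xp * tdp ∧
      deriv (fun xm => EIVP tp tdp xp xdp 0 0 xm 0) 0 = (1 / 2) * deriv g xp * tdp ^ 2 ∧
      deriv (fun xdm => EIVP tp tdp xp xdp 0 0 0 xdm) 0 = -xdp) ∧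
    (∀ tp xp : ℝ → ℝ, ContDiff ℝ 2 tp → ContDiff ℝ 2 xp → ∀ γ : ℝ,
      ((deriv (fun tm => EIVP (tp γ) (deriv tp γ) (xp γ) (deriv xp γ) tm 0 0 0) 0
          - deriv (fun s =>
              deriv (fun tdm => EIVP (tp s) (deriv tp s) (xp s) (deriv xp s) 0 tdm 0 0) 0) γ
            = 0)
        ↔ deriv (fun s => g (xp s) * deriv tp s) γ = 0) ∧
      ((deriv (fun xm => EIVP (tp γ) (deriv tp γ) (xp γ) (deriv xp γ) 0 0 xm 0) 0
          - deriv (fun s =>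
              deriv (fun xdm => EIVP (tp s) (deriv tp s) (xp s) (deriv xp s) 0 0 0 xdm) 0) γ
            = 0)
        ↔ deriv (deriv xp) γ + (1 / 2) * deriv g (xp γ) * (deriv tp γ) ^ 2 = 0)) := by
  subst hEIVP hEBVP
  have hgd : Differentiable ℝ g := by
    subst hg
    exact differentiable_const _ |>.add (((hV.differentiable one_ne_zero).const_mul 2).div_const m)
  simp only [show (0:ℝ)/2 = 0 by norm_num, add_zero, sub_zero]
  have h1 : ∀ xp tdp xdp : ℝ,
      deriv (fun _ : ℝ => (1/2) * (g xp * tdp ^ 2 - xdp ^ 2)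
        - (1/2) * (g xp * tdp ^ 2 - xdp ^ 2)) 0 = 0 := by
    intro xp tdp xdp
    simp
  have h2 : ∀ xp tdp xdp : ℝ,
      deriv (fun tdm : ℝ => (1/2) * (g xp * (tdp + tdm/2) ^ 2 - xdp ^ 2)
        - (1/2) * (g xp * (tdp - tdm/2) ^ 2 - xdp ^ 2)) 0 = g xp * tdp := by
    intro xp tdp xdp
    have e : (fun tdm : ℝ => (1/2) * (g xp * (tdp + tdm/2) ^ 2 - xdp ^ 2)
        - (1/2) * (g xp * (tdp - tdm/2) ^ 2 - xdp ^ 2)) = fun tdm => g xp * tdp * tdm := by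
      funext tdm; ring
    rw [e]
    simpa using ((hasDerivAt_id (0:ℝ)).const_mul (g xp * tdp)).deriv
  have h4 : ∀ xp tdp xdp : ℝ,
      deriv (fun xdm : ℝ => (1/2) * (g xp * tdp ^ 2 - (xdp + xdm/2) ^ 2)
        - (1/2) * (g xp * tdp ^ 2 - (xdp - xdm/2) ^ 2)) 0 = -xdp := by
    intro xp tdp xdp
    have e : (fun xdm : ℝ => (1/2) * (g xp * tdp ^ 2 - (xdp + xdm/2) ^ 2)
        - (1/2) * (g xp * tdp ^ 2 - (xdp - xdm/2) ^ 2)) = fun xdm => -xdp * xdm := by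
      funext xdm; ring
    rw [e]
    simpa using ((hasDerivAt_id (0:ℝ)).const_mul (-xdp)).deriv
  have h3 : ∀ xp tdp xdp : ℝ,
      deriv (fun xm : ℝ => (1/2) * (g (xp + xm/2) * tdp ^ 2 - xdp ^ 2)
        - (1/2) * (g (xp - xm/2) * tdp ^ 2 - xdp ^ 2)) 0
        = (1/2) * deriv g xp * tdp ^ 2 := by
    intro xp tdp xdp
    have hA : HasDerivAt (fun xm : ℝ => xp + xm/2) (1/2) 0 := by
      simpa using ((hasDerivAt_id (0:ℝ)).div_const 2).const_add xp
    have hA' : HasDerivAt (fun xm : ℝ => xp - xm/2) (-(1/2)) 0 := by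
      simpa using ((hasDerivAt_id (0:ℝ)).div_const 2).const_sub xp
    have hgx1 : HasDerivAt g (deriv g xp) ((fun xm : ℝ => xp + xm/2) 0) := by
      simpa using (hgd xp).hasDerivAt
    have hgx2 : HasDerivAt g (deriv g xp) ((fun xm : ℝ => xp - xm/2) 0) := by
      simpa using (hgd xp).hasDerivAt
    have hB : HasDerivAt (fun xm : ℝ => g (xp + xm/2)) (deriv g xp * (1/2)) 0 :=
      HasDerivAt.comp 0 hgx1 hA
    have hC : HasDerivAt (fun xm : ℝ => g (xp - xm/2)) (deriv g xp * (-(1/2))) 0 :=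
      HasDerivAt.comp 0 hgx2 hA'
    have hfull := (((hB.mul_const (tdp^2)).sub_const (xdp^2)).const_mul (1/2)).sub
      (((hC.mul_const (tdp^2)).sub_const (xdp^2)).const_mul (1/2))
    exact hfull.deriv.trans (by ring)
  constructor
  · intro tp tdp xp xdp
    exact ⟨h1 xp tdp xdp, h2 xp tdp xdp, h3 xp tdp xdp, h4 xp tdp xdp⟩
  · intro tp xp htp hxp γ
    constructor
    · have e2 : (fun s => deriv (fun tdm : ℝ =>
          (1/2) * (g (xp s) * (deriv tp s + tdm/2) ^ 2 - (deriv xp s) ^ 2)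
          - (1/2) * (g (xp s) * (deriv tp s - tdm/2) ^ 2 - (deriv xp s) ^ 2)) 0)
          = fun s => g (xp s) * deriv tp s := by
        funext s; exact h2 (xp s) (deriv tp s) (deriv xp s)
      rw [h1 (xp γ) (deriv tp γ) (deriv xp γ), e2]
      constructor <;> intro h <;> linarith
    · have e4 : (fun s => deriv (fun xdm : ℝ =>
          (1/2) * (g (xp s) * (deriv tp s) ^ 2 - (deriv xp s + xdm/2) ^ 2)
          - (1/2) * (g (xp s) * (deriv tp s) ^ 2 - (deriv xp s - xdm/2) ^ 2)) 0)
          = fun s => -(deriv xp s) := by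
        funext s; exact h4 (xp s) (deriv tp s) (deriv xp s)
      rw [h3 (xp γ) (deriv tp γ) (deriv xp γ), e4, deriv.fun_neg]
      constructor <;> intro h <;> linarith
end
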